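/- Let n be a natural number and let φ be a ℂ-algebra automorphism of the Laurent polynomial algebra ℂ[ℤⁿ] (the monoid algebra AddMonoidAlgebra ℂ (Fin n → ℤ)). Let ε : ℂ[ℤⁿ] → ℂ be the augmentation homomorphism, i.e., the ℂ-algebra map sending single a 1 to 1 for every a ∈ ℤⁿ (evaluation at the identity of the torus). If ε ∘ φ = ε, then there exists a ℤ-linear automorphism M of ℤⁿ = (Fin n → ℤ) such that φ(single a 1) = single (M a) 1 for every a ∈ ℤⁿ; that is, φ is induced by a group automorphism of ℤⁿ. -/

import Mathlib

open AddMonoidAlgebra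

/-- In a group algebra over a field-like coefficient ring, with a `TwoUniqueSums` exponent
monoid, every left factor of `1` is a single monomial. -/
lemma aux_unit_is_single {G : Type*} [AddCommMonoid G] [TwoUniqueSums G]
    {f g : AddMonoidAlgebra ℂ G} (h : f * g = 1) :
    ∃ (a : G) (c : ℂ), c ≠ 0 ∧ f = AddMonoidAlgebra.single a c := by
  classical
  have hf : f ≠ 0 := by rintro rfl; simp at h
  have hg : g ≠ 0 := by rintro rfl; simp at h
  by_cases hc : 1 < f.coeff.support.card * g.coeff.support.card
  · obtain ⟨p1, hp1, p2, hp2, hne, h1, h2⟩ := TwoUniqueSums.uniqueAdd_of_one_lt_card hc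
    exfalso
    rw [Finset.mem_product] at hp1 hp2
    have e1 : (f * g).coeff (p1.1 + p1.2) = f.coeff p1.1 * g.coeff p1.2 :=
      AddMonoidAlgebra.coeff_mul_add_of_uniqueAdd h1
    have e2 : (f * g).coeff (p2.1 + p2.2) = f.coeff p2.1 * g.coeff p2.2 :=
      AddMonoidAlgebra.coeff_mul_add_of_uniqueAdd h2
    have n1 : (f * g).coeff (p1.1 + p1.2) ≠ 0 := by
      rw [e1]
      exact mul_ne_zero (Finsupp.mem_support_iff.mp hp1.1) (Finsupp.mem_support_iff.mp hp1.2)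
    have n2 : (f * g).coeff (p2.1 + p2.2) ≠ 0 := by
      rw [e2]
      exact mul_ne_zero (Finsupp.mem_support_iff.mp hp2.1) (Finsupp.mem_support_iff.mp hp2.2)
    rw [h, AddMonoidAlgebra.one_def, AddMonoidAlgebra.coeff_single] at n1 n2
    have z1 : p1.1 + p1.2 = 0 := by
      by_contra hz
      exact n1 (Finsupp.single_eq_of_ne' (fun he => hz he.symm))
    have z2 : p2.1 + p2.2 = 0 := by
      by_contra hz
      exact n2 (Finsupp.single_eq_of_ne' (fun he => hz he.symm))
    have := h1 hp2.1 hp2.2 (z2.trans z1.symm)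
    exact hne (Prod.ext this.1 this.2).symm
  · push_neg at hc
    have hf1 : f.coeff.support.card = 1 := by
      have h1 : 1 ≤ f.coeff.support.card := Finset.card_pos.mpr (Finsupp.support_nonempty_iff.mpr (fun h0 => hf (AddMonoidAlgebra.coeff_eq_zero.mp h0)))
      have h2 : 1 ≤ g.coeff.support.card := Finset.card_pos.mpr (Finsupp.support_nonempty_iff.mpr (fun h0 => hg (AddMonoidAlgebra.coeff_eq_zero.mp h0)))
      nlinarith
    obtain ⟨a, c, hc0, hfe⟩ := Finsupp.card_support_eq_one'.mp hf1
    exact ⟨a, c, hc0, AddMonoidAlgebra.coeff_injective hfe⟩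

theorem algAut_addMonoidAlgebra_fixing_augmentation_eq_groupAut
    (n : ℕ)
    (φ : AddMonoidAlgebra ℂ (Fin n → ℤ) ≃ₐ[ℂ] AddMonoidAlgebra ℂ (Fin n → ℤ))
    (ε : AddMonoidAlgebra ℂ (Fin n → ℤ) →ₐ[ℂ] ℂ)
    (hε : ∀ a : Fin n → ℤ, ε (AddMonoidAlgebra.single a 1) = 1)
    (hεφ : ∀ f : AddMonoidAlgebra ℂ (Fin n → ℤ), ε (φ f) = ε f) :
    ∃ M : (Fin n → ℤ) ≃ₗ[ℤ] (Fin n → ℤ),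
      ∀ a : Fin n → ℤ,
        φ (AddMonoidAlgebra.single a 1) = AddMonoidAlgebra.single (M a) 1 := by
  classical
  set G := (Fin n → ℤ)
  -- ε of a monomial with coefficient c is c
  have hεc : ∀ (a : G) (c : ℂ), ε (AddMonoidAlgebra.single a c) = c := by
    intro a c
    have : AddMonoidAlgebra.single a c = c • AddMonoidAlgebra.single a (1 : ℂ) := by
      rw [AddMonoidAlgebra.smul_single', mul_one]
    rw [this, map_smul, hε, smul_eq_mul, mul_one]
  -- each monomial maps to a monomial with coefficient 1
  have key : ∀ (ψ : AddMonoidAlgebra ℂ G ≃ₐ[ℂ] AddMonoidAlgebra ℂ G),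
      (∀ f, ε (ψ f) = ε f) → ∀ a : G, ∃ b : G,
        ψ (AddMonoidAlgebra.single a 1) = AddMonoidAlgebra.single b 1 := by
    intro ψ hψ a
    have hmul : ψ (AddMonoidAlgebra.single a 1) * ψ (AddMonoidAlgebra.single (-a) 1) = 1 := by
      rw [← map_mul, AddMonoidAlgebra.single_mul_single, add_neg_cancel, one_mul,
        ← AddMonoidAlgebra.one_def, map_one]
    obtain ⟨b, c, hc0, hbe⟩ := aux_unit_is_single hmul
    have : c = 1 := by
      have h1 : ε (ψ (AddMonoidAlgebra.single a 1)) = 1 := by rw [hψ, hε]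
      rw [hbe, hεc] at h1
      exact h1
    exact ⟨b, by rw [hbe, this]⟩
  choose m hm using key φ hεφ
  have hεφs : ∀ f, ε (φ.symm f) = ε f := by
    intro f
    conv_rhs => rw [← φ.apply_symm_apply f]
    rw [hεφ]
  choose m' hm' using key φ.symm hεφs
  have hsingle_inj : ∀ x y : G, AddMonoidAlgebra.single x (1 : ℂ) =
      AddMonoidAlgebra.single y 1 → x = y := by
    intro x y hxy
    exact AddMonoidAlgebra.single_left_injective one_ne_zero hxy
  have hmm' : ∀ b, m (m' b) = b := by
    intro b
    apply hsingle_inj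
    rw [← hm, ← hm', φ.apply_symm_apply]
  have hm'm : ∀ a, m' (m a) = a := by
    intro a
    apply hsingle_inj
    rw [← hm', ← hm, φ.symm_apply_apply]
  have hadd : ∀ a b : G, m (a + b) = m a + m b := by
    intro a b
    apply hsingle_inj
    have hsm : AddMonoidAlgebra.single (a + b) (1 : ℂ) =
        AddMonoidAlgebra.single a 1 * AddMonoidAlgebra.single b 1 := by
      rw [AddMonoidAlgebra.single_mul_single, one_mul]
    rw [← hm, hsm, map_mul, hm, hm, AddMonoidAlgebra.single_mul_single, one_mul]
  let E : G ≃+ G :=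
    { toFun := m
      invFun := m'
      left_inv := hm'm
      right_inv := hmm'
      map_add' := hadd }
  exact ⟨E.toIntLinearEquiv, fun a => hm a⟩
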